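/- Policy iteration on the compressed MDP generates a sequence of decision-list policies whose value functions are monotonically non-decreasing, and it terminates with an optimal decision-list policy after finitely many iterations (at most the number of distinct decision-list policies, (m!)^n). -/

import Mathlib

open Finset


lemma pda_sumw {α : Type*} [DecidableEq α] (ρ : α → ℝ) (s : Finset α) :
    ∑ B ∈ s.powerset, (∏ k ∈ B, ρ k) * ∏ k ∈ s \ B, (1 - ρ k) = 1 := by
  rw [← Finset.prod_add]
  simp

lemma pda_key {α : Type*} [LinearOrder α] (ρ q : α → ℝ) (s : Finset α) :
    ∑ B ∈ s.powerset, ((∏ k ∈ B, ρ k) * ∏ k ∈ s \ B, (1 - ρ k)) *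
        (if h : B.Nonempty then q (B.min' h) else 0)
      = ∑ a ∈ s, (∏ b ∈ s.filter (fun b => b < a), (1 - ρ b)) * ρ a * q a := by
  classical
  induction s using Finset.induction_on_min with
  | empty => simp
  | insert a s ha ih =>
    have hanot : a ∉ s := fun h => lt_irrefl a (ha a h)
    rw [Finset.sum_powerset_insert hanot, Finset.sum_insert hanot]
    have h1 : ∀ B ∈ s.powerset,
        ((∏ k ∈ B, ρ k) * ∏ k ∈ insert a s \ B, (1 - ρ k)) *
          (if h : B.Nonempty then q (B.min' h) else 0)
        = (1 - ρ a) * (((∏ k ∈ B, ρ k) * ∏ k ∈ s \ B, (1 - ρ k)) *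
          (if h : B.Nonempty then q (B.min' h) else 0)) := by
      intro B hB
      have hBs : B ⊆ s := Finset.mem_powerset.mp hB
      have haB : a ∉ B := fun h => hanot (hBs h)
      have : insert a s \ B = insert a (s \ B) := by
        ext x; simp only [Finset.mem_sdiff, Finset.mem_insert]
        constructor
        · rintro ⟨h1 | h1, h2⟩
          · exact Or.inl h1
          · exact Or.inr ⟨h1, h2⟩
        · rintro (h1 | ⟨h1, h2⟩)
          · exact ⟨Or.inl h1, h1 ▸ haB⟩
          · exact ⟨Or.inr h1, h2⟩
      rw [this, Finset.prod_insert (fun h => hanot (Finset.mem_sdiff.mp h).1)]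
      ring
    have h2 : ∀ B ∈ s.powerset,
        ((∏ k ∈ insert a B, ρ k) * ∏ k ∈ insert a s \ insert a B, (1 - ρ k)) *
          (if h : (insert a B).Nonempty then q ((insert a B).min' h) else 0)
        = (ρ a * q a) * ((∏ k ∈ B, ρ k) * ∏ k ∈ s \ B, (1 - ρ k)) := by
      intro B hB
      have hBs : B ⊆ s := Finset.mem_powerset.mp hB
      have haB : a ∉ B := fun h => hanot (hBs h)
      have hset : insert a s \ insert a B = s \ B := by
        ext x; simp only [Finset.mem_sdiff, Finset.mem_insert, not_or]
        constructor
        · rintro ⟨h1 | h1, h2, h3⟩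
          · exact absurd h1 h2
          · exact ⟨h1, h3⟩
        · rintro ⟨h1, h2⟩
          exact ⟨Or.inr h1, fun h => hanot (h ▸ h1), h2⟩
      have hne : (insert a B).Nonempty := Finset.insert_nonempty a B
      have hmin : (insert a B).min' hne = a := by
        apply le_antisymm (Finset.min'_le _ _ (Finset.mem_insert_self a B))
        apply Finset.le_min'
        intro y hy
        rcases Finset.mem_insert.mp hy with h | h
        · exact h.ge
        · exact (ha y (hBs h)).le
      rw [hset, Finset.prod_insert haB, dif_pos hne, hmin]
      ring
    rw [Finset.sum_congr rfl h1, Finset.sum_congr rfl h2, ← Finset.mul_sum, ih,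
      ← Finset.mul_sum, pda_sumw, mul_one]
    have hfa : (insert a s).filter (fun b => b < a) = ∅ := by
      apply Finset.filter_eq_empty_iff.mpr
      intro x hx
      rcases Finset.mem_insert.mp hx with h | h
      · simp [h]
      · exact not_lt.mpr (ha x h).le
    have hfx : ∀ x ∈ s, (insert a s).filter (fun b => b < x)
        = insert a (s.filter (fun b => b < x)) := by
      intro x hx
      rw [Finset.filter_insert, if_pos (ha x hx)]
    have hR : ∑ x ∈ s, (∏ b ∈ (insert a s).filter (fun b => b < x), (1 - ρ b)) * ρ x * q x
        = (1 - ρ a) * ∑ x ∈ s, (∏ b ∈ s.filter (fun b => b < x), (1 - ρ b)) * ρ x * q x := by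
      rw [Finset.mul_sum]
      apply Finset.sum_congr rfl
      intro x hx
      rw [hfx x hx, Finset.prod_insert (fun h => hanot (Finset.mem_filter.mp h).1)]
      ring
    rw [hfa, hR]
    simp only [Finset.prod_empty, one_mul]
    ring

lemma pda_key_univ (m : ℕ) (ρ q : Fin m → ℝ) :
    ∑ B : Finset (Fin m), ((∏ k ∈ B, ρ k) * ∏ k ∈ Bᶜ, (1 - ρ k)) *
        (if h : B.Nonempty then q (B.min' h) else 0)
      = ∑ a : Fin m, (∏ b ∈ univ.filter (fun b => b < a), (1 - ρ b)) * ρ a * q a := by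
  have h := pda_key ρ q (univ : Finset (Fin m))
  rw [Finset.powerset_univ] at h
  rw [show (∑ B : Finset (Fin m), ((∏ k ∈ B, ρ k) * ∏ k ∈ Bᶜ, (1 - ρ k)) *
      (if hn : B.Nonempty then q (B.min' hn) else 0))
    = ∑ B : Finset (Fin m), ((∏ k ∈ B, ρ k) * ∏ k ∈ univ \ B, (1 - ρ k)) *
      (if hn : B.Nonempty then q (B.min' hn) else 0) from
    Finset.sum_congr rfl fun B _ => by rw [Finset.compl_eq_univ_sdiff]]
  convert h using 2 with B

lemma pda_sumw_univ (m : ℕ) (ρ : Fin m → ℝ) :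
    ∑ B : Finset (Fin m), (∏ k ∈ B, ρ k) * ∏ k ∈ Bᶜ, (1 - ρ k) = 1 := by
  have h := pda_sumw ρ (univ : Finset (Fin m))
  rw [Finset.powerset_univ] at h
  rw [show (∑ B : Finset (Fin m), (∏ k ∈ B, ρ k) * ∏ k ∈ Bᶜ, (1 - ρ k))
    = ∑ B : Finset (Fin m), (∏ k ∈ B, ρ k) * ∏ k ∈ univ \ B, (1 - ρ k) from
    Finset.sum_congr rfl fun B _ => by rw [Finset.compl_eq_univ_sdiff]]
  convert h using 2 with B

lemma pda_w_nonneg (m : ℕ) (ρ : Fin m → ℝ) (h0 : ∀ k, 0 ≤ ρ k) (h1 : ∀ k, ρ k ≤ 1)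
    (B : Finset (Fin m)) : 0 ≤ (∏ k ∈ B, ρ k) * ∏ k ∈ Bᶜ, (1 - ρ k) :=
  mul_nonneg (Finset.prod_nonneg fun k _ => h0 k)
    (Finset.prod_nonneg fun k _ => by linarith [h1 k])

lemma pda_wstar_reindex (m : ℕ) (ρ q : Fin m → ℝ) (σ : Equiv.Perm (Fin m)) :
    ∑ A : Finset (Fin m), ((∏ k ∈ A, ρ k) * ∏ k ∈ Aᶜ, (1 - ρ k)) *
        (if h : A.Nonempty then A.sup' h q else 0)
      = ∑ B : Finset (Fin m), ((∏ k ∈ B, ρ (σ k)) * ∏ k ∈ Bᶜ, (1 - ρ (σ k))) *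
        (if h : B.Nonempty then B.sup' h (fun k => q (σ k)) else 0) := by
  refine (Fintype.sum_equiv σ.finsetCongr _ _ ?_).symm
  intro B
  simp only [Equiv.finsetCongr_apply]
  have hcompl : (B.map σ.toEmbedding)ᶜ = Bᶜ.map σ.toEmbedding := by
    ext x
    simp [Finset.mem_map_equiv]
  rw [hcompl, Finset.prod_map, Finset.prod_map]
  by_cases h : B.Nonempty
  · have h' : (B.map σ.toEmbedding).Nonempty := h.map
    rw [dif_pos h]; simp only [h', ↓reduceDIte, Finset.sup'_map]
    rfl
  · have h' : ¬ (B.map σ.toEmbedding).Nonempty := by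
      simpa [Finset.map_nonempty] using h
    rw [dif_neg h]; simp only [h', ↓reduceDIte]
    rfl

lemma pda_T_le (m : ℕ) (ρ q : Fin m → ℝ) (σ : Equiv.Perm (Fin m))
    (h0 : ∀ k, 0 ≤ ρ k) (h1 : ∀ k, ρ k ≤ 1) :
    ∑ a : Fin m, (∏ b ∈ univ.filter (fun b => b < a), (1 - ρ (σ b))) * ρ (σ a) * q (σ a)
      ≤ ∑ A : Finset (Fin m), ((∏ k ∈ A, ρ k) * ∏ k ∈ Aᶜ, (1 - ρ k)) *
        (if h : A.Nonempty then A.sup' h q else 0) := by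
  rw [← pda_key_univ m (fun k => ρ (σ k)) (fun k => q (σ k)), pda_wstar_reindex m ρ q σ]
  apply Finset.sum_le_sum
  intro B _
  by_cases h : B.Nonempty
  · rw [dif_pos h, dif_pos h]
    exact mul_le_mul_of_nonneg_left (Finset.le_sup' (fun k => q (σ k)) (B.min'_mem h))
      (pda_w_nonneg m (fun k => ρ (σ k)) (fun k => h0 _) (fun k => h1 _) B)
  · rw [dif_neg h, dif_neg h]

lemma pda_T_eq (m : ℕ) (ρ q : Fin m → ℝ) (σ : Equiv.Perm (Fin m))
    (hsort : ∀ a b : Fin m, a ≤ b → q (σ b) ≤ q (σ a)) :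
    ∑ a : Fin m, (∏ b ∈ univ.filter (fun b => b < a), (1 - ρ (σ b))) * ρ (σ a) * q (σ a)
      = ∑ A : Finset (Fin m), ((∏ k ∈ A, ρ k) * ∏ k ∈ Aᶜ, (1 - ρ k)) *
        (if h : A.Nonempty then A.sup' h q else 0) := by
  rw [← pda_key_univ m (fun k => ρ (σ k)) (fun k => q (σ k)), pda_wstar_reindex m ρ q σ]
  apply Finset.sum_congr rfl
  intro B _
  by_cases h : B.Nonempty
  · rw [dif_pos h, dif_pos h]
    congr 1
    refine le_antisymm (Finset.le_sup' (fun k => q (σ k)) (B.min'_mem h)) (Finset.sup'_le _ _ ?_)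
    intro k hk
    exact hsort _ _ (Finset.min'_le B k hk)
  · rw [dif_neg h, dif_neg h]

lemma pda_coeff_sum_le_one (m : ℕ) (ρ : Fin m → ℝ)
    (h0 : ∀ k, 0 ≤ ρ k) (h1 : ∀ k, ρ k ≤ 1) :
    ∑ a : Fin m, (∏ b ∈ univ.filter (fun b => b < a), (1 - ρ b)) * ρ a ≤ 1 := by
  have h := pda_key_univ m ρ (fun _ => (1 : ℝ))
  simp only [mul_one] at h
  rw [← h]
  calc ∑ B : Finset (Fin m), ((∏ k ∈ B, ρ k) * ∏ k ∈ Bᶜ, (1 - ρ k)) *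
        (if _ : B.Nonempty then (1:ℝ) else 0)
      ≤ ∑ B : Finset (Fin m), ((∏ k ∈ B, ρ k) * ∏ k ∈ Bᶜ, (1 - ρ k)) := by
        apply Finset.sum_le_sum
        intro B _
        by_cases hB : B.Nonempty
        · simp [hB]
        · simp [hB, pda_w_nonneg m ρ h0 h1 B]
    _ = 1 := pda_sumw_univ m ρ

lemma pda_le_fixed {S : Type*} [Fintype S] [Nonempty S] (m : ℕ)
    (p : S → Fin m → S → ℝ) (r : S → Fin m → ℝ) (γ : ℝ) (hγ0 : 0 ≤ γ) (hγ1 : γ < 1)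
    (hp0 : ∀ s k s', 0 ≤ p s k s') (hp1 : ∀ s k, ∑ s', p s k s' = 1)
    (ρ : S → Fin m → ℝ) (hρ0 : ∀ s k, 0 ≤ ρ s k) (hρ1 : ∀ s k, ρ s k ≤ 1)
    (σ : S → Equiv.Perm (Fin m)) (W V' : S → ℝ)
    (hW : ∀ s, W s ≤ ∑ a : Fin m,
      (∏ b ∈ univ.filter (fun b => b < a), (1 - ρ s (σ s b))) * ρ s (σ s a) *
        (r s (σ s a) + γ * ∑ s', p s (σ s a) s' * W s'))
    (hV : ∀ s, V' s = ∑ a : Fin m,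
      (∏ b ∈ univ.filter (fun b => b < a), (1 - ρ s (σ s b))) * ρ s (σ s a) *
        (r s (σ s a) + γ * ∑ s', p s (σ s a) s' * V' s')) :
    ∀ s, W s ≤ V' s := by
  obtain ⟨s₀, -, hs₀⟩ := Finset.exists_max_image (univ : Finset S)
    (fun s => W s - V' s) univ_nonempty
  have hs₀' : ∀ s, W s - V' s ≤ W s₀ - V' s₀ := fun s => hs₀ s (mem_univ s)
  set δ := W s₀ - V' s₀ with hδ
  suffices hle : δ ≤ 0 by
    intro s; have := hs₀' s; linarith
  by_contra hpos
  push_neg at hpos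
  have hcnn : ∀ a : Fin m,
      0 ≤ (∏ b ∈ univ.filter (fun b => b < a), (1 - ρ s₀ (σ s₀ b))) * ρ s₀ (σ s₀ a) :=
    fun a => mul_nonneg (Finset.prod_nonneg fun b _ => by linarith [hρ1 s₀ (σ s₀ b)])
      (hρ0 s₀ (σ s₀ a))
  have hkey : δ ≤ γ * δ := by
    have h1 : δ ≤ (∑ a : Fin m,
        (∏ b ∈ univ.filter (fun b => b < a), (1 - ρ s₀ (σ s₀ b))) * ρ s₀ (σ s₀ a) *
          (r s₀ (σ s₀ a) + γ * ∑ s', p s₀ (σ s₀ a) s' * W s'))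
        - (∑ a : Fin m,
        (∏ b ∈ univ.filter (fun b => b < a), (1 - ρ s₀ (σ s₀ b))) * ρ s₀ (σ s₀ a) *
          (r s₀ (σ s₀ a) + γ * ∑ s', p s₀ (σ s₀ a) s' * V' s')) := by
      have := hW s₀
      have := hV s₀
      rw [hδ]
      linarith
    have h2 : (∑ a : Fin m,
        (∏ b ∈ univ.filter (fun b => b < a), (1 - ρ s₀ (σ s₀ b))) * ρ s₀ (σ s₀ a) *
          (r s₀ (σ s₀ a) + γ * ∑ s', p s₀ (σ s₀ a) s' * W s'))
        - (∑ a : Fin m,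
        (∏ b ∈ univ.filter (fun b => b < a), (1 - ρ s₀ (σ s₀ b))) * ρ s₀ (σ s₀ a) *
          (r s₀ (σ s₀ a) + γ * ∑ s', p s₀ (σ s₀ a) s' * V' s'))
        = ∑ a : Fin m,
        (∏ b ∈ univ.filter (fun b => b < a), (1 - ρ s₀ (σ s₀ b))) * ρ s₀ (σ s₀ a) *
          (γ * ∑ s', p s₀ (σ s₀ a) s' * (W s' - V' s')) := by
      rw [← Finset.sum_sub_distrib]
      apply Finset.sum_congr rfl
      intro a _
      have h3 : ∑ s', p s₀ (σ s₀ a) s' * (W s' - V' s')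
          = (∑ s', p s₀ (σ s₀ a) s' * W s') - ∑ s', p s₀ (σ s₀ a) s' * V' s' := by
        rw [← Finset.sum_sub_distrib]
        exact Finset.sum_congr rfl fun s' _ => by ring
      rw [h3]; ring
    have h4 : ∀ a : Fin m,
        (∏ b ∈ univ.filter (fun b => b < a), (1 - ρ s₀ (σ s₀ b))) * ρ s₀ (σ s₀ a) *
          (γ * ∑ s', p s₀ (σ s₀ a) s' * (W s' - V' s'))
        ≤ (∏ b ∈ univ.filter (fun b => b < a), (1 - ρ s₀ (σ s₀ b))) * ρ s₀ (σ s₀ a) *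
          (γ * δ) := by
      intro a
      apply mul_le_mul_of_nonneg_left _ (hcnn a)
      apply mul_le_mul_of_nonneg_left _ hγ0
      calc ∑ s', p s₀ (σ s₀ a) s' * (W s' - V' s')
          ≤ ∑ s', p s₀ (σ s₀ a) s' * δ := Finset.sum_le_sum fun s' _ =>
            mul_le_mul_of_nonneg_left (hs₀' s') (hp0 s₀ (σ s₀ a) s')
        _ = δ := by rw [← Finset.sum_mul, hp1, one_mul]
    calc δ ≤ _ := h1
      _ = _ := h2
      _ ≤ ∑ a : Fin m,
          (∏ b ∈ univ.filter (fun b => b < a), (1 - ρ s₀ (σ s₀ b))) * ρ s₀ (σ s₀ a) *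
            (γ * δ) := Finset.sum_le_sum fun a _ => h4 a
      _ = (∑ a : Fin m,
          (∏ b ∈ univ.filter (fun b => b < a), (1 - ρ s₀ (σ s₀ b))) * ρ s₀ (σ s₀ a))
            * (γ * δ) := by rw [Finset.sum_mul]
      _ ≤ 1 * (γ * δ) := mul_le_mul_of_nonneg_right
          (pda_coeff_sum_le_one m (fun k => ρ s₀ (σ s₀ k))
            (fun k => hρ0 s₀ (σ s₀ k)) (fun k => hρ1 s₀ (σ s₀ k)))
          (mul_nonneg hγ0 hpos.le)
      _ = γ * δ := one_mul _
  nlinarith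


/-- Policy iteration on the compressed SAS-MDP under PDA (policy evaluation of
decision-list policies, greedy improvement by sorting Q-values) produces value functions
that are monotonically non-decreasing, and within `(m!)^n` iterations reaches an optimal
decision-list policy, i.e. one whose value function is a fixed point of the compressed
Bellman operator. -/
theorem stmt19 {S : Type*} [Fintype S] [Nonempty S] (m : ℕ) (hm : 0 < m)
    (p : S → Fin m → S → ℝ) (r : S → Fin m → ℝ) (γ : ℝ) (hγ0 : 0 ≤ γ) (hγ1 : γ < 1)
    (hp0 : ∀ s k s', 0 ≤ p s k s') (hp1 : ∀ s k, ∑ s', p s k s' = 1)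
    (ρ : S → Fin m → ℝ) (hρ0 : ∀ s k, 0 ≤ ρ s k) (hρ1 : ∀ s k, ρ s k ≤ 1)
    (hdefault : ∃ k₀ : Fin m, ∀ s, ρ s k₀ = 1)
    (μ : ℕ → S → Equiv.Perm (Fin m))
    (V : ℕ → S → ℝ)
    -- policy evaluation: `V i` is the value of the decision-list policy `μ i`
    (heval : ∀ i s, V i s = ∑ a : Fin m,
      (∏ b ∈ univ.filter (fun b => b < a), (1 - ρ s (μ i s b))) * ρ s (μ i s a) *
        (r s (μ i s a) + γ * ∑ s', p s (μ i s a) s' * V i s'))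
    -- policy improvement: `μ (i+1)` sorts actions by descending Q-values w.r.t. `V i`
    (hgreedy : ∀ i s (a b : Fin m), a ≤ b →
      r s (μ (i+1) s b) + γ * ∑ s', p s (μ (i+1) s b) s' * V i s'
        ≤ r s (μ (i+1) s a) + γ * ∑ s', p s (μ (i+1) s a) s' * V i s') :
    (∀ i s, V i s ≤ V (i+1) s) ∧
    (∃ i ≤ (Nat.factorial m) ^ (Fintype.card S),
      ∀ s, V i s = ∑ A : Finset (Fin m),
        ((∏ k ∈ A, ρ s k) * ∏ k ∈ Aᶜ, (1 - ρ s k)) *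
        (if h : A.Nonempty then
          A.sup' h (fun k => r s k + γ * ∑ s', p s k s' * V i s')
        else 0)) := by
  classical
  have hstep : ∀ i s, V i s ≤ V (i+1) s := by
    intro i
    refine pda_le_fixed m p r γ hγ0 hγ1 hp0 hp1 ρ hρ0 hρ1 (μ (i+1)) (V i) (V (i+1))
      ?_ (heval (i+1))
    intro s
    have h2 := pda_T_le m (ρ s) (fun k => r s k + γ * ∑ s', p s k s' * V i s') (μ i s)
      (hρ0 s) (hρ1 s)
    have h3 := pda_T_eq m (ρ s) (fun k => r s k + γ * ∑ s', p s k s' * V i s') (μ (i+1) s)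
      (fun a b hab => hgreedy i s a b hab)
    exact le_trans (le_of_eq (heval i s)) (le_trans h2 (le_of_eq h3.symm))
  refine ⟨hstep, ?_⟩
  have hchain : ∀ i j, i ≤ j → ∀ s, V i s ≤ V j s := by
    intro i j hij
    induction j, hij using Nat.le_induction with
    | base => exact fun s => le_refl _
    | succ n hn ih => exact fun s => le_trans (ih s) (hstep n s)
  set N := Nat.factorial m ^ Fintype.card S with hN
  have main : ∀ a b : ℕ, a ≤ N → a < b → μ a = μ b →
      (∃ i ≤ N, ∀ s, V i s = ∑ A : Finset (Fin m),
        ((∏ k ∈ A, ρ s k) * ∏ k ∈ Aᶜ, (1 - ρ s k)) *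
        (if h : A.Nonempty then
          A.sup' h (fun k => r s k + γ * ∑ s', p s k s' * V i s')
        else 0)) := by
    intro a b haN hab hμ
    have hba : ∀ s, V b s ≤ V a s := by
      refine pda_le_fixed m p r γ hγ0 hγ1 hp0 hp1 ρ hρ0 hρ1 (μ a) (V b) (V a)
        ?_ (heval a)
      intro s
      rw [hμ]
      exact (heval b s).le
    have heq1 : ∀ s, V a s = V (a+1) s := by
      intro s
      refine le_antisymm (hstep a s) ?_
      exact le_trans (hchain (a+1) b (Nat.succ_le_of_lt hab) s) (hba s)
    have hfun : V (a+1) = V a := funext fun s => (heq1 s).symm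
    refine ⟨a, haN, ?_⟩
    intro s
    have h5 := heval (a+1) s
    rw [hfun] at h5
    rw [h5]
    exact pda_T_eq m (ρ s) (fun k => r s k + γ * ∑ s', p s k s' * V a s') (μ (a+1) s)
      (fun x y hxy => hgreedy a s x y hxy)
  have hcard : Fintype.card (S → Equiv.Perm (Fin m)) = N := by
    rw [Fintype.card_fun, Fintype.card_perm, Fintype.card_fin, hN]
  obtain ⟨i, j, hne, heqμ⟩ := Fintype.exists_ne_map_eq_of_card_lt
    (fun i : Fin (N+1) => μ i) (by rw [hcard, Fintype.card_fin]; exact Nat.lt_succ_self N)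
  rcases hne.lt_or_gt with hij | hij
  · exact main i j (Nat.lt_succ_iff.mp i.isLt) hij heqμ
  · exact main j i (Nat.lt_succ_iff.mp j.isLt) hij heqμ.symm
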